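/- Let n ≥ 2, d ≥ 1, 0 < ε ≤ 1/3, and let f : ℝ^n → ℝ be any function. Then the number of simple d-regular graphs G on the labelled vertex set {1,…,n} such that (1−ε)·xᵀL_G x ≤ f(x) ≤ (1+ε)·xᵀL_G x for all x ∈ ℝ^n is at most 2^(dn/2 + 5ε²d²n·log₂ n). -/

import Mathlib

open Matrix Finset

/-- The Laplacian quadratic form `xᵀ L_G x` of a simple graph `G` on vertex set `Fin n`. -/
noncomputable def lapQuadForm {n : ℕ} (G : SimpleGraph (Fin n)) (x : Fin n → ℝ) : ℝ :=
  letI := Classical.decRel G.Adj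
  x ⬝ᵥ (G.lapMatrix ℝ *ᵥ x)

/-- `G` is `d`-regular: every vertex has degree `d`. -/
def IsRegOfDeg {n : ℕ} (G : SimpleGraph (Fin n)) (d : ℕ) : Prop :=
  letI := Classical.decRel G.Adj
  G.IsRegularOfDegree d

lemma quad_dom_trace {n : ℕ} (B M : Matrix (Fin n) (Fin n) ℝ) (ε : ℝ)
    (hB : B.IsHermitian) (hM : M.IsHermitian)
    (h : ∀ x : Fin n → ℝ, |x ⬝ᵥ (B *ᵥ x)| ≤ ε * (x ⬝ᵥ (M *ᵥ x))) :
    Matrix.trace (B * B) ≤ ε ^ 2 * Matrix.trace (M * M) := by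
  classical
  set U : Matrix (Fin n) (Fin n) ℝ := (hB.eigenvectorUnitary : Matrix (Fin n) (Fin n) ℝ) with hU
  have hU1 : U * star U = 1 := (Matrix.mem_unitaryGroup_iff).mp (hB.eigenvectorUnitary).2
  have hU2 : star U * U = 1 := (Matrix.mem_unitaryGroup_iff').mp (hB.eigenvectorUnitary).2
  set D : Matrix (Fin n) (Fin n) ℝ := Matrix.diagonal (RCLike.ofReal ∘ hB.eigenvalues) with hD
  have hspecD : star U * B * U = D := hB.conjStarAlgAut_star_eigenvectorUnitary
  set C : Matrix (Fin n) (Fin n) ℝ := star U * M * U with hC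
  -- key: diagonal entries as quadratic forms
  have key : ∀ (A : Matrix (Fin n) (Fin n) ℝ) (i : Fin n),
      (star U * A * U) i i = (fun k => U k i) ⬝ᵥ (A *ᵥ (fun k => U k i)) := by
    intro A i
    simp only [Matrix.mul_apply, dotProduct, Matrix.mulVec, Matrix.star_apply,
      Matrix.conjTranspose_apply, star_trivial, Finset.sum_mul, Finset.mul_sum]
    rw [Finset.sum_comm]
    refine Finset.sum_congr rfl fun k _ => Finset.sum_congr rfl fun l _ => by ring
  -- trace of B*B equals sum of squared eigenvalues
  have hBUD : B = U * D * star U := hB.spectral_theorem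
  have t1 : Matrix.trace (B * B) = Matrix.trace (D * D) := by
    rw [hBUD]
    have : U * D * star U * (U * D * star U) = U * (D * D) * star U := by
      rw [show U * D * star U * (U * D * star U) = U * D * (star U * U) * D * star U by
        noncomm_ring]
      rw [hU2]
      noncomm_ring
    rw [this, Matrix.trace_mul_cycle, ← Matrix.mul_assoc, hU2, Matrix.one_mul]
  have hMC : M = U * C * star U := by
    rw [hC]
    rw [show U * (star U * M * U) * star U = (U * star U) * M * (U * star U) by noncomm_ring,
      hU1]
    noncomm_ring
  have t2 : Matrix.trace (M * M) = Matrix.trace (C * C) := by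
    rw [hMC]
    have : U * C * star U * (U * C * star U) = U * (C * C) * star U := by
      rw [show U * C * star U * (U * C * star U) = U * C * (star U * U) * C * star U by
        noncomm_ring]
      rw [hU2]
      noncomm_ring
    rw [this, Matrix.trace_mul_cycle, ← Matrix.mul_assoc, hU2, Matrix.one_mul]
  -- C is symmetric
  have hCsymm : ∀ i j, C j i = C i j := by
    intro i j
    have hCH : C.IsHermitian := by
      have h2 := Matrix.isHermitian_mul_mul_conjTranspose (star U) hM
      rw [hC]
      simpa [Matrix.star_eq_conjTranspose] using h2
    have := hCH.apply i j
    rw [← this]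
    simp [Matrix.conjTranspose_apply]
  -- pointwise bound
  have hpoint : ∀ i, (D i i)^2 ≤ ε^2 * (C i i)^2 := by
    intro i
    have hi := h (fun k => U k i)
    rw [← key B i, ← key M i, hspecD] at hi
    calc (D i i)^2 = |D i i|^2 := (sq_abs _).symm
      _ ≤ (ε * (C i i))^2 := by
          apply pow_le_pow_left₀ (abs_nonneg _) hi
      _ = ε^2 * (C i i)^2 := by ring
  -- trace(D*D) = sum of squares of diagonal
  have t3 : Matrix.trace (D * D) = ∑ i, (D i i)^2 := by
    simp only [Matrix.trace, Matrix.diag, Matrix.mul_apply, sq]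
    refine Finset.sum_congr rfl fun i _ => ?_
    rw [Finset.sum_eq_single i]
    · intro j _ hj
      have : D i j = 0 := Matrix.diagonal_apply_ne _ (fun hij => hj (by simp [hij.symm]))
      simp [this]
    · intro hi; exact absurd (Finset.mem_univ i) hi
  -- trace(C*C) ≥ sum of squares of diagonal
  have t4 : ∑ i, (C i i)^2 ≤ Matrix.trace (C * C) := by
    simp only [Matrix.trace, Matrix.diag, Matrix.mul_apply]
    apply Finset.sum_le_sum
    intro i _
    have : ∀ j, C i j * C j i = (C i j)^2 := fun j => by rw [hCsymm i j]; ring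
    simp only [this]
    exact Finset.single_le_sum (f := fun j => (C i j)^2) (fun j _ => sq_nonneg (C i j)) (Finset.mem_univ i)
  calc Matrix.trace (B * B) = ∑ i, (D i i)^2 := by rw [t1, t3]
    _ ≤ ∑ i, ε^2 * (C i i)^2 := Finset.sum_le_sum fun i _ => hpoint i
    _ = ε^2 * ∑ i, (C i i)^2 := by rw [Finset.mul_sum]
    _ ≤ ε^2 * Matrix.trace (C * C) := by
        apply mul_le_mul_of_nonneg_left t4 (sq_nonneg _)
    _ = ε^2 * Matrix.trace (M * M) := by rw [t2]

lemma trace_mul_self_symm {n : ℕ} (A : Matrix (Fin n) (Fin n) ℝ) (h : A.IsHermitian) :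
    Matrix.trace (A * A) = ∑ i, ∑ j, (A i j)^2 := by
  simp only [Matrix.trace, Matrix.diag, Matrix.mul_apply, sq]
  refine Finset.sum_congr rfl fun i _ => Finset.sum_congr rfl fun j _ => ?_
  congr 1
  have := h.apply i j
  rw [← this]
  simp [Matrix.conjTranspose_apply]


lemma sum_choose_le (N m : ℕ) : ∑ k ∈ Finset.range (m+1), N.choose k ≤ (N+1)^m := by
  induction m with
  | zero => simp
  | succ m ih =>
      rw [Finset.sum_range_succ, pow_succ]
      have h1 : N.choose (m+1) ≤ N ^ (m+1) := Nat.choose_le_pow _ _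
      have h2 : N ^ (m+1) ≤ N * (N+1)^m := by
        rw [pow_succ']
        exact Nat.mul_le_mul_left N (Nat.pow_le_pow_left (Nat.le_succ N) m)
      calc ∑ k ∈ Finset.range (m+1), N.choose k + N.choose (m+1)
          ≤ (N+1)^m + N * (N+1)^m := Nat.add_le_add ih (h1.trans h2)
        _ = (N+1)^m * (N+1) := by ring

lemma row_sum_adj {n : ℕ} (G : SimpleGraph (Fin n)) (i : Fin n) :
    letI := Classical.decRel G.Adj
    ∑ j, (G.adjMatrix ℝ) i j = (G.degree i : ℝ) := by
  letI := Classical.decRel G.Adj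
  simp [SimpleGraph.adjMatrix_apply, Finset.sum_boole, SimpleGraph.degree,
    SimpleGraph.neighborFinset_eq_filter]


lemma lap_diag' {n d : ℕ} (G : SimpleGraph (Fin n)) (hG : IsRegOfDeg G d) (i : Fin n) :
    (letI := Classical.decRel G.Adj; G.lapMatrix ℝ i i) = (d : ℝ) := by
  letI := Classical.decRel G.Adj
  have hG' : ∀ v, G.degree v = d := hG
  simp [SimpleGraph.lapMatrix, SimpleGraph.degMatrix]
  exact_mod_cast hG' i


lemma lap_diag {n d : ℕ} (G : SimpleGraph (Fin n)) (hG : IsRegOfDeg G d) (i : Fin n) :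
    (letI := Classical.decRel G.Adj; G.lapMatrix ℝ i i) = (d : ℝ) := by
  letI := Classical.decRel G.Adj
  simp [SimpleGraph.lapMatrix, SimpleGraph.degMatrix, hG i]


lemma lap_offdiag {n : ℕ} (G : SimpleGraph (Fin n)) {i j : Fin n} (hij : i ≠ j) :
    (letI := Classical.decRel G.Adj; G.lapMatrix ℝ i j)
      = (letI := Classical.decRel G.Adj; -((G.adjMatrix ℝ) i j)) := by
  letI := Classical.decRel G.Adj
  simp [SimpleGraph.lapMatrix, SimpleGraph.degMatrix, Matrix.diagonal_apply_ne _ hij]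


lemma sumM_bound {n d : ℕ} (G G₀ : SimpleGraph (Fin n))
    (hG : IsRegOfDeg G d) (hG₀ : IsRegOfDeg G₀ d) :
    letI := Classical.decRel G.Adj
    letI := Classical.decRel G₀.Adj
    ∑ i, ∑ j, ((G.lapMatrix ℝ + G₀.lapMatrix ℝ) i j)^2
      ≤ (n : ℝ) * (4*d^2 + 4*d) := by
  letI := Classical.decRel G.Adj
  letI := Classical.decRel G₀.Adj
  have row : ∀ i : Fin n, ∑ j, ((G.lapMatrix ℝ + G₀.lapMatrix ℝ) i j)^2
      ≤ 4*(d:ℝ)^2 + 4*d := by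
    intro i
    rw [← Finset.sum_erase_add _ _ (Finset.mem_univ i)]
    have hdiag : ((G.lapMatrix ℝ + G₀.lapMatrix ℝ) i i)^2 = 4*(d:ℝ)^2 := by
      rw [Matrix.add_apply, lap_diag G hG i, lap_diag G₀ hG₀ i]; ring
    have hoff : ∑ j ∈ Finset.univ.erase i, ((G.lapMatrix ℝ + G₀.lapMatrix ℝ) i j)^2
        ≤ 4*(d:ℝ) := by
      have hterm : ∀ j ∈ Finset.univ.erase i,
          ((G.lapMatrix ℝ + G₀.lapMatrix ℝ) i j)^2
            ≤ 2 * (G.adjMatrix ℝ) i j + 2 * (G₀.adjMatrix ℝ) i j := by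
        intro j hj
        have hij : i ≠ j := fun h => (Finset.mem_erase.mp hj).1 h.symm
        rw [Matrix.add_apply, lap_offdiag G hij, lap_offdiag G₀ hij,
          SimpleGraph.adjMatrix_apply, SimpleGraph.adjMatrix_apply]
        by_cases h1 : G.Adj i j <;> by_cases h2 : G₀.Adj i j <;> simp [h1, h2] <;> norm_num
      calc ∑ j ∈ Finset.univ.erase i, ((G.lapMatrix ℝ + G₀.lapMatrix ℝ) i j)^2
          ≤ ∑ j ∈ Finset.univ.erase i,
              (2 * (G.adjMatrix ℝ) i j + 2 * (G₀.adjMatrix ℝ) i j) :=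
            Finset.sum_le_sum hterm
        _ ≤ ∑ j, (2 * (G.adjMatrix ℝ) i j + 2 * (G₀.adjMatrix ℝ) i j) := by
            apply Finset.sum_le_sum_of_subset_of_nonneg (Finset.erase_subset _ _)
            intro j _ _
            simp only [SimpleGraph.adjMatrix_apply]
            split <;> split <;> norm_num
        _ = 4*(d:ℝ) := by
            have hG' : ∀ v, G.degree v = d := hG
            have hG₀' : ∀ v, G₀.degree v = d := hG₀
            rw [Finset.sum_add_distrib, ← Finset.mul_sum, ← Finset.mul_sum,
              row_sum_adj, row_sum_adj, hG' i, hG₀' i]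
            ring
    linarith
  calc ∑ i, ∑ j, ((G.lapMatrix ℝ + G₀.lapMatrix ℝ) i j)^2
      ≤ ∑ _i : Fin n, (4*(d:ℝ)^2 + 4*d) := Finset.sum_le_sum fun i _ => row i
    _ = (n : ℝ) * (4*d^2 + 4*d) := by simp [Finset.sum_const, Finset.card_univ]; ring

lemma card_edges_reg {n d : ℕ} (G : SimpleGraph (Fin n)) (hG : IsRegOfDeg G d) :
    letI := Classical.decRel G.Adj
    2 * G.edgeFinset.card = n * d := by
  letI := Classical.decRel G.Adj
  have hG' : ∀ v, G.degree v = d := hG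
  rw [← SimpleGraph.sum_degrees_eq_twice_card_edges]
  simp [hG']


lemma sumB_eq {n d : ℕ} (G G₀ : SimpleGraph (Fin n))
    (hG : IsRegOfDeg G d) (hG₀ : IsRegOfDeg G₀ d) :
    letI := Classical.decRel G.Adj
    letI := Classical.decRel G₀.Adj
    ∑ i, ∑ j, ((G.lapMatrix ℝ - G₀.lapMatrix ℝ) i j)^2
      = 4 * ((G.edgeFinset \ G₀.edgeFinset).card : ℝ) := by
  letI := Classical.decRel G.Adj
  letI := Classical.decRel G₀.Adj
  -- the symmetric difference graph
  set K : SimpleGraph (Fin n) :=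
    { Adj := fun i j => ¬(G.Adj i j ↔ G₀.Adj i j)
      symm := by
        constructor
        intro i j hij
        rw [SimpleGraph.adj_comm G, SimpleGraph.adj_comm G₀]
        exact hij
      loopless := by constructor; intro i h; exact h (by simp) } with hK
  letI : DecidableRel K.Adj := Classical.decRel K.Adj
  have hKadj : ∀ i j, K.Adj i j ↔ ¬(G.Adj i j ↔ G₀.Adj i j) := fun i j => Iff.rfl
  -- entries
  have hentry : ∀ i j, ((G.lapMatrix ℝ - G₀.lapMatrix ℝ) i j)^2
      = if K.Adj i j then (1:ℝ) else 0 := by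
    intro i j
    by_cases hij : i = j
    · subst hij
      rw [Matrix.sub_apply, lap_diag' G hG i, lap_diag' G₀ hG₀ i]
      simp [hKadj]
    · rw [Matrix.sub_apply]
      have e1 : G.lapMatrix ℝ i j = -((G.adjMatrix ℝ) i j) := by
        simp [SimpleGraph.lapMatrix, SimpleGraph.degMatrix, Matrix.diagonal_apply_ne _ hij]
      have e2 : G₀.lapMatrix ℝ i j = -((G₀.adjMatrix ℝ) i j) := by
        simp [SimpleGraph.lapMatrix, SimpleGraph.degMatrix, Matrix.diagonal_apply_ne _ hij]
      rw [e1, e2]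
      simp only [SimpleGraph.adjMatrix_apply]
      by_cases h1 : G.Adj i j <;> by_cases h2 : G₀.Adj i j <;>
        simp [h1, h2, hKadj] <;> norm_num
  -- sum equals twice the number of edges of K
  have hsum : ∑ i, ∑ j, ((G.lapMatrix ℝ - G₀.lapMatrix ℝ) i j)^2
      = 2 * (K.edgeFinset.card : ℝ) := by
    have : ∀ i : Fin n, ∑ j, ((G.lapMatrix ℝ - G₀.lapMatrix ℝ) i j)^2
        = (K.degree i : ℝ) := by
      intro i
      rw [Finset.sum_congr rfl fun j _ => hentry i j, Finset.sum_boole]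
      congr 1
      simp [SimpleGraph.degree, SimpleGraph.neighborFinset_eq_filter]
    rw [Finset.sum_congr rfl fun i _ => this i]
    rw [← Nat.cast_sum]
    rw [SimpleGraph.sum_degrees_eq_twice_card_edges]
    push_cast
    ring
  -- edge set of K is the symmetric difference
  have hKedge : K.edgeFinset = (G.edgeFinset \ G₀.edgeFinset) ∪ (G₀.edgeFinset \ G.edgeFinset) := by
    ext e
    induction e with
    | _ i j =>
      simp only [SimpleGraph.mem_edgeFinset, Finset.mem_union, Finset.mem_sdiff,
        SimpleGraph.mem_edgeFinset, SimpleGraph.mem_edgeSet]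
      tauto
  have hdisj : Disjoint (G.edgeFinset \ G₀.edgeFinset) (G₀.edgeFinset \ G.edgeFinset) :=
    disjoint_sdiff_sdiff
  have hcards : (G₀.edgeFinset \ G.edgeFinset).card = (G.edgeFinset \ G₀.edgeFinset).card := by
    have c1 := Finset.card_sdiff_add_card_inter G.edgeFinset G₀.edgeFinset
    have c2 := Finset.card_sdiff_add_card_inter G₀.edgeFinset G.edgeFinset
    rw [Finset.inter_comm] at c2
    have e1 := card_edges_reg G hG
    have e2 := card_edges_reg G₀ hG₀
    omega
  rw [hsum, hKedge, Finset.card_union_of_disjoint hdisj, hcards]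
  push_cast
  ring

-- Structural lemma
lemma diff_card_le {n d : ℕ} (ε : ℝ) (G G₀ : SimpleGraph (Fin n))
    (hG : IsRegOfDeg G d) (hG₀ : IsRegOfDeg G₀ d) (f : (Fin n → ℝ) → ℝ)
    (h1 : ∀ x, (1 - ε) * lapQuadForm G x ≤ f x ∧ f x ≤ (1 + ε) * lapQuadForm G x)
    (h2 : ∀ x, (1 - ε) * lapQuadForm G₀ x ≤ f x ∧ f x ≤ (1 + ε) * lapQuadForm G₀ x) :
    letI := Classical.decRel G.Adj
    letI := Classical.decRel G₀.Adj
    ((G.edgeFinset \ G₀.edgeFinset).card : ℝ) ≤ ε^2 * n * d * (d+1) := by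
  letI := Classical.decRel G.Adj
  letI := Classical.decRel G₀.Adj
  have hBH : (G.lapMatrix ℝ - G₀.lapMatrix ℝ).IsHermitian :=
    ((SimpleGraph.posSemidef_lapMatrix ℝ G).1).sub ((SimpleGraph.posSemidef_lapMatrix ℝ G₀).1)
  have hMH : (G.lapMatrix ℝ + G₀.lapMatrix ℝ).IsHermitian :=
    ((SimpleGraph.posSemidef_lapMatrix ℝ G).1).add ((SimpleGraph.posSemidef_lapMatrix ℝ G₀).1)
  have hquad : ∀ x : Fin n → ℝ,
      |x ⬝ᵥ ((G.lapMatrix ℝ - G₀.lapMatrix ℝ) *ᵥ x)|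
        ≤ ε * (x ⬝ᵥ ((G.lapMatrix ℝ + G₀.lapMatrix ℝ) *ᵥ x)) := by
    intro x
    have e1 : x ⬝ᵥ ((G.lapMatrix ℝ - G₀.lapMatrix ℝ) *ᵥ x)
        = lapQuadForm G x - lapQuadForm G₀ x := by
      rw [Matrix.sub_mulVec, dotProduct_sub]; rfl
    have e2 : x ⬝ᵥ ((G.lapMatrix ℝ + G₀.lapMatrix ℝ) *ᵥ x)
        = lapQuadForm G x + lapQuadForm G₀ x := by
      rw [Matrix.add_mulVec, dotProduct_add]; rfl
    obtain ⟨a1, a2⟩ := h1 x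
    obtain ⟨b1, b2⟩ := h2 x
    rw [e1, e2, abs_le]
    constructor <;> linarith
  have key := quad_dom_trace _ _ ε hBH hMH hquad
  rw [trace_mul_self_symm _ hBH, trace_mul_self_symm _ hMH] at key
  rw [sumB_eq G G₀ hG hG₀] at key
  have hM := sumM_bound G G₀ hG hG₀
  have key2 : 4 * ((G.edgeFinset \ G₀.edgeFinset).card : ℝ)
      ≤ ε^2 * ((n:ℝ) * (4*d^2 + 4*d)) :=
    le_trans key (mul_le_mul_of_nonneg_left hM (sq_nonneg ε))
  have hring : ε^2 * ((n:ℝ) * (4*d^2 + 4*d)) = 4 * (ε^2 * n * d * (d+1)) := by ring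
  linarith

lemma card_small_subsets {α : Type*} [Fintype α] [DecidableEq α] (m : ℕ) :
    ((Finset.univ : Finset α).powerset.filter (fun S => S.card ≤ m)).card
      ≤ (Fintype.card α + 1)^m := by
  classical
  have hset : (Finset.univ : Finset α).powerset.filter (fun S => S.card ≤ m)
      = (Finset.range (m+1)).biUnion (fun k => Finset.powersetCard k Finset.univ) := by
    ext S
    simp only [Finset.mem_filter, Finset.mem_powerset, Finset.mem_biUnion, Finset.mem_range,
      Finset.mem_powersetCard, Nat.lt_succ_iff]
    constructor
    · rintro ⟨hsub, hcard⟩; exact ⟨S.card, hcard, hsub, rfl⟩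
    · rintro ⟨k, hk, hsub, rfl⟩; exact ⟨hsub, hk⟩
  rw [hset]
  calc ((Finset.range (m+1)).biUnion (fun k => Finset.powersetCard k Finset.univ)).card
      ≤ ∑ k ∈ Finset.range (m+1), (Finset.powersetCard k (Finset.univ : Finset α)).card :=
        Finset.card_biUnion_le
    _ = ∑ k ∈ Finset.range (m+1), (Fintype.card α).choose k := by
        simp [Finset.card_powersetCard, Finset.card_univ]
    _ ≤ (Fintype.card α + 1)^m := sum_choose_le _ m

/-- Any fixed function `f : ℝⁿ → ℝ` is an `ε`-spectral sketch of at most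
`2^(dn/2 + 5ε²d²n log₂ n)` simple `d`-regular graphs on `n` labelled vertices. -/
theorem sketch_count (n d : ℕ) (hn : 2 ≤ n) (hd : 1 ≤ d) (ε : ℝ) (hε : 0 < ε)
    (hε' : ε ≤ 1 / 3) (f : (Fin n → ℝ) → ℝ) :
    ((Set.ncard {G : SimpleGraph (Fin n) | IsRegOfDeg G d ∧
        ∀ x : Fin n → ℝ,
          (1 - ε) * lapQuadForm G x ≤ f x ∧ f x ≤ (1 + ε) * lapQuadForm G x}) : ℝ) ≤
      2 ^ ((d : ℝ) * n / 2 + 5 * ε ^ 2 * d ^ 2 * n * Real.logb 2 n) := by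
  classical
  set 𝒢 := {G : SimpleGraph (Fin n) | IsRegOfDeg G d ∧
      ∀ x : Fin n → ℝ,
        (1 - ε) * lapQuadForm G x ≤ f x ∧ f x ≤ (1 + ε) * lapQuadForm G x} with h𝒢
  rcases Set.eq_empty_or_nonempty 𝒢 with hE | ⟨G₀, hG₀mem⟩
  · rw [hE, Set.ncard_empty]
    simp only [Nat.cast_zero]
    positivity
  obtain ⟨hG₀reg, hG₀f⟩ := hG₀mem
  letI := Classical.decRel G₀.Adj
  set E₀ : Finset (Sym2 (Fin n)) := G₀.edgeFinset with hE₀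
  set m : ℕ := ⌊ε^2 * n * d * (d+1)⌋₊ with hm
  set Φ : SimpleGraph (Fin n) → Finset (Sym2 (Fin n)) × Finset (Sym2 (Fin n)) :=
    fun G => (letI := Classical.decRel G.Adj; G.edgeFinset \ E₀,
              letI := Classical.decRel G.Adj; E₀ \ G.edgeFinset) with hΦ
  set T : Finset (Finset (Sym2 (Fin n)) × Finset (Sym2 (Fin n))) :=
    ((Finset.univ : Finset (Sym2 (Fin n))).powerset.filter (fun S => S.card ≤ m)) ×ˢ
      E₀.powerset with hT
  have hmaps : ∀ G ∈ 𝒢, Φ G ∈ T := by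
    intro G hGmem
    obtain ⟨hreg, hf⟩ := hGmem
    letI := Classical.decRel G.Adj
    have hcard := diff_card_le ε G G₀ hreg hG₀reg f hf hG₀f
    refine Finset.mem_product.mpr ⟨Finset.mem_filter.mpr ⟨Finset.mem_powerset.mpr
      (Finset.subset_univ _), ?_⟩, Finset.mem_powerset.mpr Finset.sdiff_subset⟩
    exact Nat.le_floor hcard
  have hinj : Set.InjOn Φ 𝒢 := by
    intro G hGm H hHm hEq
    letI := Classical.decRel G.Adj
    letI := Classical.decRel H.Adj
    have h1 : G.edgeFinset \ E₀ = H.edgeFinset \ E₀ := congrArg Prod.fst hEq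
    have h2 : E₀ \ G.edgeFinset = E₀ \ H.edgeFinset := congrArg Prod.snd hEq
    have hrecover : ∀ (A : Finset (Sym2 (Fin n))), A = (A \ E₀) ∪ (E₀ \ (E₀ \ A)) := by
      intro A
      ext a
      simp only [Finset.mem_union, Finset.mem_sdiff]
      tauto
    have hedge : G.edgeFinset = H.edgeFinset := by
      rw [hrecover G.edgeFinset, h1, h2, ← hrecover H.edgeFinset]
    exact SimpleGraph.edgeFinset_inj.mp hedge
  have hcount : 𝒢.ncard ≤ T.card := by
    calc 𝒢.ncard = (Φ '' 𝒢).ncard := (Set.ncard_image_of_injOn hinj).symm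
      _ ≤ (↑T : Set _).ncard := Set.ncard_le_ncard
          (by rintro _ ⟨G, hGm, rfl⟩; exact hmaps G hGm) T.finite_toSet
      _ = T.card := Set.ncard_coe_finset T
  -- numeric bound
  set Ns : ℕ := Fintype.card (Sym2 (Fin n)) with hNs
  have hTcard : T.card ≤ (Ns + 1)^m * 2^(E₀.card) := by
    rw [hT, Finset.card_product, Finset.card_powerset]
    exact Nat.mul_le_mul_right _ (card_small_subsets m)
  -- key numeric facts
  have hnR : (2:ℝ) ≤ (n:ℝ) := by exact_mod_cast hn
  have hdR : (1:ℝ) ≤ (d:ℝ) := by exact_mod_cast hd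
  have h2Ns : 2 * Ns = n * (n+1) := by
    have hdvd : 2 ∣ (n+1) * n := by
      rw [Nat.mul_comm]; exact (Nat.even_mul_succ_self n).two_dvd
    rw [hNs, Sym2.card, Fintype.card_fin, Nat.choose_two_right, Nat.add_sub_cancel,
      Nat.mul_div_cancel' hdvd, Nat.mul_comm]
  have hNsR : ((Ns:ℝ) + 1) ≤ (n:ℝ)^2 := by
    have h2NsR : 2 * (Ns:ℝ) = (n:ℝ) * ((n:ℝ)+1) := by exact_mod_cast h2Ns
    nlinarith
  have he₀ : 2 * (E₀.card : ℝ) = (n:ℝ) * d := by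
    have := card_edges_reg G₀ hG₀reg
    exact_mod_cast this
  have hmR : (m:ℝ) ≤ ε^2 * n * d * (d+1) := Nat.floor_le (by positivity)
  set L : ℝ := Real.logb 2 n with hL
  have hL0 : 0 ≤ L := Real.logb_nonneg (by norm_num) (by linarith)
  have h2L : (2:ℝ) ^ L = (n:ℝ) := Real.rpow_logb (by norm_num) (by norm_num) (by linarith)
  -- assemble the real chain
  have chain : ((Ns + 1)^m * 2^(E₀.card) : ℕ) ≤
      (2:ℝ) ^ ((d : ℝ) * n / 2 + 5 * ε ^ 2 * d ^ 2 * n * L) := by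
    push_cast
    have step1 : ((Ns:ℝ) + 1)^m * (2:ℝ)^(E₀.card) ≤ ((n:ℝ)^2)^m * (2:ℝ)^(E₀.card) := by
      apply mul_le_mul_of_nonneg_right (pow_le_pow_left₀ (by positivity) hNsR m) (by positivity)
    have step2 : ((n:ℝ)^2)^m * (2:ℝ)^(E₀.card)
        = (2:ℝ) ^ (L * (2*m) + (E₀.card : ℝ)) := by
      rw [Real.rpow_add (by norm_num)]
      congr 1
      · rw [← pow_mul, ← h2L, ← Real.rpow_natCast ((2:ℝ)^L) (2*m), ← Real.rpow_mul (by norm_num)]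
        push_cast
        ring_nf
      · rw [Real.rpow_natCast]
    have step3 : L * (2*m) + (E₀.card : ℝ)
        ≤ (d : ℝ) * n / 2 + 5 * ε ^ 2 * d ^ 2 * n * L := by
      have hb1 : (E₀.card : ℝ) = (d : ℝ) * n / 2 := by linarith
      have hb2 : 2*(m:ℝ) ≤ 5 * ε ^ 2 * d ^ 2 * n := by nlinarith [sq_nonneg ε, hmR]
      have hb3 : L * (2*(m:ℝ)) ≤ (5 * ε ^ 2 * d ^ 2 * n) * L := by
        rw [mul_comm]
        exact mul_le_mul_of_nonneg_right hb2 hL0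
      linarith [hb3]
    calc ((Ns:ℝ) + 1)^m * (2:ℝ)^(E₀.card) ≤ (2:ℝ) ^ (L * (2*m) + (E₀.card : ℝ)) := by
          rw [← step2]; exact step1
      _ ≤ (2:ℝ) ^ ((d : ℝ) * n / 2 + 5 * ε ^ 2 * d ^ 2 * n * L) :=
          Real.rpow_le_rpow_of_exponent_le (by norm_num) step3
  calc ((𝒢.ncard : ℝ)) ≤ ((T.card : ℕ) : ℝ) := by exact_mod_cast hcount
    _ ≤ (((Ns + 1)^m * 2^(E₀.card) : ℕ) : ℝ) := by exact_mod_cast hTcard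
    _ ≤ (2:ℝ) ^ ((d : ℝ) * n / 2 + 5 * ε ^ 2 * d ^ 2 * n * L) := chain
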